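/- arXiv:2112.06582 — 3 statements merged into one kernel-verified Lean document; each statement's English description precedes it below -/
import Mathlib

section
/- Let I, O, m be natural numbers, let g_R, g_T : ℝ^I → ℝ^O be functions, and let c ∈ ℝ^I, G ∈ ℝ^{I×m}, P ⊆ ℝ^m be an input star set. Suppose there is a finite family of exact outputs ⟨c_R^k, G_R^k, P_R^k⟩ (k ∈ K) of g_R on ⟨c,G,P⟩ such that the union of the P_R^k over k equals P, and for each k there is a finite family of exact outputs ⟨c_T^{k,j}, G_T^{k,j}, P_T^{k,j}⟩ (j ∈ J_k) of g_T on ⟨c,G,P_R^k⟩ such that the union of the P_T^{k,j} over j equals P_R^k. Then the union over all k, j of the sets {(c_R^k + G_R^k α, c_T^{k,j} + G_T^{k,j} α) | α ∈ P_T^{k,j}} equals {(g_R(x), g_T(x)) | x ∈ ⟦⟨c,G,P⟩⟧}. -/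
/-- Output correspondence for families of exact outputs covering the input predicate. -/
theorem nn_output_correspondence_family
    (I O m : ℕ) (gR gT : (Fin I → ℝ) → (Fin O → ℝ))
    (c : Fin I → ℝ) (G : Matrix (Fin I) (Fin m) ℝ) (P : Set (Fin m → ℝ))
    (K : Type) [Fintype K]
    (cR : K → Fin O → ℝ) (GR : K → Matrix (Fin O) (Fin m) ℝ)
    (PR : K → Set (Fin m → ℝ))
    (hPRsub : ∀ k, PR k ⊆ P)
    (hR : ∀ k, ∀ α ∈ PR k, gR (c + G.mulVec α) = cR k + (GR k).mulVec α)
    (hPRcover : (⋃ k, PR k) = P)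
    (J : K → Type) [∀ k, Fintype (J k)]
    (cT : (k : K) → J k → Fin O → ℝ) (GT : (k : K) → J k → Matrix (Fin O) (Fin m) ℝ)
    (PT : (k : K) → J k → Set (Fin m → ℝ))
    (hPTsub : ∀ k (j : J k), PT k j ⊆ PR k)
    (hT : ∀ k (j : J k), ∀ α ∈ PT k j, gT (c + G.mulVec α) = cT k j + (GT k j).mulVec α)
    (hPTcover : ∀ k, (⋃ j : J k, PT k j) = PR k) :
    (⋃ k, ⋃ j : J k,
        {p : (Fin O → ℝ) × (Fin O → ℝ) |
          ∃ α ∈ PT k j, p = (cR k + (GR k).mulVec α, cT k j + (GT k j).mulVec α)}) =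
    {p : (Fin O → ℝ) × (Fin O → ℝ) |
        ∃ x ∈ {y : Fin I → ℝ | ∃ α ∈ P, y = c + G.mulVec α}, p = (gR x, gT x)} := by
  ext p
  simp only [Set.mem_iUnion, Set.mem_setOf_eq]
  constructor
  · rintro ⟨k, j, α, hα, rfl⟩
    have hαR : α ∈ PR k := hPTsub k j hα
    exact ⟨c + G.mulVec α, ⟨α, hPRsub k hαR, rfl⟩,
      by rw [hR k α hαR, hT k j α hα]⟩
  · rintro ⟨x, ⟨α, hαP, rfl⟩, rfl⟩
    have : α ∈ ⋃ k, PR k := hPRcover ▸ hαP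
    obtain ⟨k, hk⟩ := Set.mem_iUnion.mp this
    have : α ∈ ⋃ j : J k, PT k j := (hPTcover k) ▸ hk
    obtain ⟨j, hj⟩ := Set.mem_iUnion.mp this
    exact ⟨k, j, α, hj, by rw [hR k α hk, hT k j α hj]⟩
end

section
/- Let c ∈ ℝ^n, G ∈ ℝ^{n×m}, P ⊆ ℝ^m define a generalized star set, let i be a coordinate index, and let f_i : ℝ^n → ℝ^n be the map that replaces the i-th coordinate of x by max(0, x_i) and leaves all other coordinates unchanged. Let P⁺ = {α ∈ P | (c + Gα)_i ≥ 0} and P⁻ = {α ∈ P | (c + Gα)_i ≤ 0}, and let D ∈ ℝ^{n×n} be the identity matrix with the i-th row replaced by zeros. Then the image of ⟦⟨c,G,P⟩⟧ under f_i equals ⟦⟨c, G, P⁺⟩⟧ ∪ ⟦⟨Dc, DG, P⁻⟩⟧. -/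
/-- The identity matrix with the `i`-th row replaced by zeros. -/
def zeroRowId (n : ℕ) (i : Fin n) : Matrix (Fin n) (Fin n) ℝ :=
  Matrix.of fun r s => if r = i then 0 else if r = s then 1 else 0

lemma zeroRowId_mulVec (n : ℕ) (i : Fin n) (v : Fin n → ℝ) :
    (zeroRowId n i).mulVec v = Function.update v i 0 := by
  funext r
  simp only [Matrix.mulVec, dotProduct, zeroRowId, Matrix.of_apply]
  by_cases h : r = i
  · subst h; simp [Function.update]
  · simp only [if_neg h, Function.update, dif_neg h]
    rw [Finset.sum_eq_single r]
    · simp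
    · intro b _ hb; simp [if_neg (Ne.symm hb)]
    · simp

/-- Exact ReLU split of a star set at neuron `i`. -/
theorem star_set_relu_split
    (n m : ℕ) (c : Fin n → ℝ) (G : Matrix (Fin n) (Fin m) ℝ) (P : Set (Fin m → ℝ))
    (i : Fin n) :
    (fun x : Fin n → ℝ => Function.update x i (max 0 (x i))) ''
        {x : Fin n → ℝ | ∃ α ∈ P, x = c + G.mulVec α} =
    {x : Fin n → ℝ | ∃ α ∈ {α ∈ P | 0 ≤ (c + G.mulVec α) i}, x = c + G.mulVec α} ∪
    {x : Fin n → ℝ | ∃ α ∈ {α ∈ P | (c + G.mulVec α) i ≤ 0},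
        x = (zeroRowId n i).mulVec c + (zeroRowId n i * G).mulVec α} := by
  have key : ∀ α : Fin m → ℝ,
      (zeroRowId n i).mulVec c + (zeroRowId n i * G).mulVec α
        = Function.update (c + G.mulVec α) i 0 := by
    intro α
    rw [← Matrix.mulVec_mulVec, ← Matrix.mulVec_add, zeroRowId_mulVec]
  ext x
  constructor
  · rintro ⟨y, ⟨α, hα, rfl⟩, rfl⟩
    rcases le_total 0 ((c + G.mulVec α) i) with h | h
    · left
      refine ⟨α, ⟨hα, h⟩, ?_⟩
      simp only [max_eq_right h, Function.update_eq_self]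
    · right
      refine ⟨α, ⟨hα, h⟩, ?_⟩
      simp only [max_eq_left h, key]
  · rintro (⟨α, ⟨hα, h⟩, rfl⟩ | ⟨α, ⟨hα, h⟩, rfl⟩)
    · exact ⟨c + G.mulVec α, ⟨α, hα, rfl⟩, by
        simp only [max_eq_right h, Function.update_eq_self]⟩
    · refine ⟨c + G.mulVec α, ⟨α, hα, rfl⟩, ?_⟩
      show Function.update (c + G.mulVec α) i (0 ⊔ (c + G.mulVec α) i) = _
      rw [max_eq_left h, key]
end

section
/- Let I, O, p, q be natural numbers with O ≥ 1, let g : ℝ^I → ℝ^O be any function, let C₁ ∈ ℝ^{p×I}, b₁ ∈ ℝ^p, C₂ ∈ ℝ^{q×O}, b₂ ∈ ℝ^q, and let ε > 0. For x ∈ ℝ^I define d_max(x) as the maximum of 0 together with all values max(0, (C₁x − b₁)_k + ε) for k ∈ {1,…,p} and max(0, (C₂ g(x) − b₂)_l + ε) for l ∈ {1,…,q}, and define d*(x) = max(0, 2ε − d_max(x)). Then for every x ∈ ℝ^I: ‖(g(x) + d*(x)·𝟙) − g(x)‖_∞ ≥ ε if and only if (C₁x)_k ≤ (b₁)_k for all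 k and (C₂ g(x))_l ≤ (b₂)_l for all l, where 𝟙 ∈ ℝ^O is the all-ones vector and ‖v‖_∞ = max_i |v_i|. -/
/-- Maximum of 0 together with the ReLU-encoded slacks of the input and output
constraints of a Net-Verify instance. -/
noncomputable def dMax (I O p q : ℕ) (g : (Fin I → ℝ) → (Fin O → ℝ))
    (C₁ : Matrix (Fin p) (Fin I) ℝ) (b₁ : Fin p → ℝ)
    (C₂ : Matrix (Fin q) (Fin O) ℝ) (b₂ : Fin q → ℝ)
    (ε : ℝ) (x : Fin I → ℝ) : ℝ :=
  max
    (Finset.univ.fold max 0 fun k : Fin p => max 0 ((C₁.mulVec x - b₁) k + ε))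
    (Finset.univ.fold max 0 fun l : Fin q => max 0 ((C₂.mulVec (g x) - b₂) l + ε))

/-- The deviation added to the second network's output in the reduction. -/
noncomputable def dStar (I O p q : ℕ) (g : (Fin I → ℝ) → (Fin O → ℝ))
    (C₁ : Matrix (Fin p) (Fin I) ℝ) (b₁ : Fin p → ℝ)
    (C₂ : Matrix (Fin q) (Fin O) ℝ) (b₂ : Fin q → ℝ)
    (ε : ℝ) (x : Fin I → ℝ) : ℝ :=
  max 0 (2 * ε - dMax I O p q g C₁ b₁ C₂ b₂ ε x)

/-- Correctness of the reduction from Net-Verify to ε-Net-Equiv: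
ε-equivalence (w.r.t. the Chebyshev norm) is violated at `x` exactly when `x`
satisfies all input and output constraints of the Net-Verify instance. -/
theorem netverify_reduction_correct
    (I O p q : ℕ) (hO : 1 ≤ O) (g : (Fin I → ℝ) → (Fin O → ℝ))
    (C₁ : Matrix (Fin p) (Fin I) ℝ) (b₁ : Fin p → ℝ)
    (C₂ : Matrix (Fin q) (Fin O) ℝ) (b₂ : Fin q → ℝ)
    (ε : ℝ) (hε : 0 < ε) :
    ∀ x : Fin I → ℝ,
      (ε ≤ ‖(g x + fun _ : Fin O => dStar I O p q g C₁ b₁ C₂ b₂ ε x) - g x‖) ↔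
      ((∀ k : Fin p, C₁.mulVec x k ≤ b₁ k) ∧ (∀ l : Fin q, C₂.mulVec (g x) l ≤ b₂ l)) := by
  intro x
  have hne : Nonempty (Fin O) := ⟨⟨0, hO⟩⟩
  have h1 : (g x + fun _ : Fin O => dStar I O p q g C₁ b₁ C₂ b₂ ε x) - g x
      = fun _ : Fin O => dStar I O p q g C₁ b₁ C₂ b₂ ε x := by
    funext i; simp
  rw [h1, pi_norm_const]
  have hpos : (0:ℝ) ≤ dStar I O p q g C₁ b₁ C₂ b₂ ε x := le_max_left _ _
  rw [Real.norm_of_nonneg hpos]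
  set d := dMax I O p q g C₁ b₁ C₂ b₂ ε x with hd
  have key : (dStar I O p q g C₁ b₁ C₂ b₂ ε x) = max 0 (2 * ε - d) := rfl
  rw [key]
  constructor
  · intro h
    have hdε : d ≤ ε := by
      rcases le_max_iff.mp h with h | h
      · linarith
      · linarith
    constructor
    · intro k
      have h2 : max 0 ((C₁.mulVec x - b₁) k + ε) ≤ d := by
        refine le_trans ?_ (le_max_left _ _)
        exact (Finset.le_fold_max _).mpr (Or.inr ⟨k, Finset.mem_univ k, le_rfl⟩)
      have h3 : (C₁.mulVec x - b₁) k + ε ≤ ε := le_trans (le_max_right _ _) (h2.trans hdε)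
      have := sub_nonpos.mp (by linarith [h3] : (C₁.mulVec x - b₁) k ≤ 0)
      simpa [sub_nonpos] using (by simpa [Pi.sub_apply] using (by linarith [h3] : (C₁.mulVec x - b₁) k ≤ 0) : C₁.mulVec x k - b₁ k ≤ 0)
    · intro l
      have h2 : max 0 ((C₂.mulVec (g x) - b₂) l + ε) ≤ d := by
        refine le_trans ?_ (le_max_right _ _)
        exact (Finset.le_fold_max _).mpr (Or.inr ⟨l, Finset.mem_univ l, le_rfl⟩)
      have h3 : (C₂.mulVec (g x) - b₂) l + ε ≤ ε := le_trans (le_max_right _ _) (h2.trans hdε)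
      simpa [sub_nonpos] using (by simpa [Pi.sub_apply] using (by linarith [h3] : (C₂.mulVec (g x) - b₂) l ≤ 0) : C₂.mulVec (g x) l - b₂ l ≤ 0)
  · rintro ⟨hk, hl⟩
    have hdε : d ≤ ε := by
      rw [hd]
      refine max_le ?_ ?_
      · rw [Finset.fold_max_le]
        refine ⟨hε.le, fun k _ => max_le hε.le ?_⟩
        have := hk k; simp only [Pi.sub_apply]; linarith
      · rw [Finset.fold_max_le]
        refine ⟨hε.le, fun l _ => max_le hε.le ?_⟩
        have := hl l; simp only [Pi.sub_apply]; linarith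
    refine le_trans ?_ (le_max_right _ _)
    linarith
end
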